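/- Let T be a finite tree with vertex set V and let M be a symmetric integer matrix adapted to T. Let e = {a, b} be an edge of T, let M₀ be the matrix that agrees with M except that its (a,b) and (b,a) entries are 0, and let M″ be the principal submatrix of M obtained by deleting the rows and columns indexed by a and b. Then det(−M) = det(−M₀) − det(−M″). -/

import Mathlib

open Matrix

/-- A matrix with a zero block whose dimensions add up to more than the size of the
matrix has determinant zero. -/
lemma det_eq_zero_of_zero_block {V : Type*} [Fintype V] [DecidableEq V]
    (A : Matrix V V ℤ) (R C : Finset V) (hcard : Fintype.card V < R.card + C.card)
    (h : ∀ u ∈ R, ∀ v ∈ C, A u v = 0) : A.det = 0 := by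
  rw [Matrix.det_apply]
  apply Finset.sum_eq_zero
  intro σ _
  have hex : ∃ v ∈ C, σ v ∈ R := by
    by_contra hc
    push_neg at hc
    have hdisj : Disjoint (C.image σ) R := by
      rw [Finset.disjoint_left]
      rintro x hx hxR
      obtain ⟨v, hv, rfl⟩ := Finset.mem_image.mp hx
      exact hc v hv hxR
    have h1 : (C.image σ).card = C.card :=
      Finset.card_image_of_injective _ σ.injective
    have h2 := Finset.card_union_of_disjoint hdisj
    have h3 : (C.image σ ∪ R).card ≤ Fintype.card V := by
      simpa using Finset.card_le_univ (C.image σ ∪ R)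
    omega
  obtain ⟨v, hv, hr⟩ := hex
  have hzero : (∏ i, A (σ i) i) = 0 :=
    Finset.prod_eq_zero (f := fun i => A (σ i) i) (Finset.mem_univ v) (h _ hr _ hv)
  rw [hzero]
  simp

/-- Cross term vanishes: replacing row `x` of `-M₀` with `-(Pi.single y 1)` yields a
singular matrix, since deleting the edge `{x,y}` from the tree disconnects `x` from `y`. -/
lemma aux_det_zero {V : Type*} [Fintype V] [DecidableEq V]
    (T : SimpleGraph V) (hacyc : T.IsAcyclic)
    (M : Matrix V V ℤ)
    (hnadj : ∀ u v, u ≠ v → ¬T.Adj u v → M u v = 0)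
    (x y : V) (hxy : T.Adj x y)
    (M₀ : Matrix V V ℤ)
    (hM₀ : ∀ u v, M₀ u v = if (u = x ∧ v = y) ∨ (u = y ∧ v = x) then 0 else M u v) :
    ((-M₀).updateRow x (-(Pi.single y 1))).det = 0 := by
  classical
  set G := T \ SimpleGraph.fromEdgeSet {s(x, y)} with hG
  have hbridge : ¬ G.Reachable x y := by
    have h1 := (SimpleGraph.isAcyclic_iff_forall_edge_isBridge.mp hacyc) ((T.mem_edgeSet).mpr hxy)
    exact SimpleGraph.isBridge_iff.mp h1
  have hGadj : ∀ u v, T.Adj u v → ¬((u = x ∧ v = y) ∨ (u = y ∧ v = x)) → G.Adj u v := by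
    intro u v huv hcond
    rw [hG]
    simp only [SimpleGraph.sdiff_adj, SimpleGraph.fromEdgeSet_adj, Set.mem_singleton_iff]
    refine ⟨huv, ?_⟩
    rintro ⟨he, -⟩
    rw [Sym2.eq_iff] at he
    exact hcond he
  have hxx : G.Reachable x x := SimpleGraph.Reachable.refl x
  apply det_eq_zero_of_zero_block _
    (insert x (Finset.univ.filter fun u => ¬ G.Reachable x u))
    (Finset.univ.filter fun v => G.Reachable x v)
  · have hx : x ∉ (Finset.univ.filter fun u => ¬ G.Reachable x u) := by
      simp only [Finset.mem_filter, Finset.mem_univ, true_and, not_not]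
      exact hxx
    rw [Finset.card_insert_of_notMem hx]
    have hsum := Finset.card_filter_add_card_filter_not
      (s := (Finset.univ : Finset V)) (p := fun v => G.Reachable x v)
    rw [Finset.card_univ] at hsum
    omega
  · intro u hu v hv
    simp only [Finset.mem_filter, Finset.mem_univ, true_and] at hv
    rcases Finset.mem_insert.mp hu with rfl | hu'
    · rw [Matrix.updateRow_self]
      have hvy : v ≠ y := fun h => hbridge (h ▸ hv)
      simp [Pi.single_apply, hvy]
    · simp only [Finset.mem_filter, Finset.mem_univ, true_and] at hu'
      have hux : u ≠ x := fun h => hu' (h ▸ hxx)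
      rw [Matrix.updateRow_ne hux]
      simp only [Matrix.neg_apply, neg_eq_zero]
      rw [hM₀]
      split_ifs with h
      · rfl
      · have huv : u ≠ v := fun h => hu' (h ▸ hv)
        refine hnadj u v huv fun hadj => ?_
        exact hu' (hv.trans ((hGadj u v hadj h).symm.reachable))

/-- Edge-deletion formula for determinants of symmetric matrices adapted to a tree:
if `e = {a, b}` is an edge of the tree `T`, `M₀` agrees with `M` except that the `(a,b)` and
`(b,a)` entries are `0`, and `M''` is the principal submatrix obtained by deleting the rows
and columns indexed by `a` and `b`, then `det(-M) = det(-M₀) - det(-M'')`. -/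
theorem det_neg_adapted_edge_deletion {V : Type*} [Fintype V] [DecidableEq V]
    (T : SimpleGraph V) (hconn : T.Connected) (hacyc : T.IsAcyclic)
    (M : Matrix V V ℤ) (hsym : M.IsSymm)
    (hadj : ∀ u v, T.Adj u v → M u v = 1)
    (hnadj : ∀ u v, u ≠ v → ¬T.Adj u v → M u v = 0)
    (a b : V) (hab : T.Adj a b)
    (M₀ : Matrix V V ℤ)
    (hM₀ : ∀ u v, M₀ u v = if (u = a ∧ v = b) ∨ (u = b ∧ v = a) then 0 else M u v) :
    (-M).det =
      (-M₀).det -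
        (-(M.submatrix (fun x : {v : V // v ≠ a ∧ v ≠ b} => x.val)
            (fun x : {v : V // v ≠ a ∧ v ≠ b} => x.val))).det := by
  classical
  have hne : a ≠ b := hab.ne
  have hMab : M a b = 1 := hadj a b hab
  have hMba : M b a = 1 := hadj b a hab.symm
  set N : Matrix V V ℤ := -M₀ with hN
  have hNval : ∀ u v, N u v = -(if (u = a ∧ v = b) ∨ (u = b ∧ v = a) then 0 else M u v) := by
    intro u v
    rw [hN, Matrix.neg_apply, hM₀ u v]
  have key : -M = (N.updateRow a (N a + -(Pi.single b 1))).updateRow b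
      (N b + -(Pi.single a 1)) := by
    ext u v
    rcases eq_or_ne u b with rfl | hub
    · rw [Matrix.updateRow_self]
      rcases eq_or_ne v a with rfl | hva
      · simp [hNval, hne, hne.symm, hMba, Pi.single_apply]
      · simp [hNval, hne, hne.symm, hva, Pi.single_apply]
    · rw [Matrix.updateRow_ne hub]
      rcases eq_or_ne u a with rfl | hua
      · rw [Matrix.updateRow_self]
        rcases eq_or_ne v b with rfl | hvb
        · simp [hNval, hne, hne.symm, hMab, Pi.single_apply]
        · simp [hNval, hvb, hne, hne.symm, Pi.single_apply]
      · rw [Matrix.updateRow_ne hua]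
        simp [hNval, hua, hub, Pi.single_apply]
  have comm : ∀ (r s : V → ℤ),
      (N.updateRow a r).updateRow b s = (N.updateRow b s).updateRow a r := by
    intro r s
    ext u v
    simp only [Matrix.updateRow_apply]
    rcases eq_or_ne u a with rfl | h1 <;> rcases eq_or_ne u b with rfl | h2 <;> simp_all
  have hPa : (N.updateRow a (N a + -(Pi.single b 1))) b = N b := Matrix.updateRow_ne hne.symm
  have hQa : (N.updateRow b (-(Pi.single a 1))) a = N a := Matrix.updateRow_ne hne
  have expand : (-M).det = N.det + (N.updateRow a (-(Pi.single b 1))).det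
      + (N.updateRow b (-(Pi.single a 1))).det
      + ((N.updateRow b (-(Pi.single a 1))).updateRow a (-(Pi.single b 1))).det := by
    rw [key, Matrix.det_updateRow_add, ← hPa, Matrix.updateRow_eq_self,
      Matrix.det_updateRow_add, Matrix.updateRow_eq_self, comm,
      Matrix.det_updateRow_add, ← hQa, Matrix.updateRow_eq_self]
    ring
  have hD1 : (N.updateRow a (-(Pi.single b 1))).det = 0 :=
    aux_det_zero T hacyc M hnadj a b hab M₀ hM₀
  have hD2 : (N.updateRow b (-(Pi.single a 1))).det = 0 := by
    refine aux_det_zero T hacyc M hnadj b a hab.symm M₀ ?_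
    intro u v
    rw [hM₀ u v]
    split_ifs with h1 h2 <;> first | rfl | tauto
  set B := (N.updateRow b (-(Pi.single a 1))).updateRow a (-(Pi.single b 1)) with hB
  let e : Fin 2 ⊕ {v : V // v ≠ a ∧ v ≠ b} ≃ V :=
    { toFun := Sum.elim ![a, b] Subtype.val
      invFun := fun v =>
        if h1 : v = a then Sum.inl 0 else if h2 : v = b then Sum.inl 1 else Sum.inr ⟨v, h1, h2⟩
      left_inv := by
        rintro (i | u)
        · fin_cases i <;> simp [hne, hne.symm]
        · simp [u.2.1, u.2.2]
      right_inv := by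
        intro v
        by_cases h1 : v = a
        · subst h1; simp
        · by_cases h2 : v = b
          · subst h2; simp [hne.symm]
          · simp [h1, h2] }
  have hsub : B.submatrix e e =
      Matrix.fromBlocks !![0, -1; -1, 0] 0
        (Matrix.of fun u i => B u.val (e (Sum.inl i)))
        (-(M.submatrix (fun x : {v : V // v ≠ a ∧ v ≠ b} => x.val)
            (fun x : {v : V // v ≠ a ∧ v ≠ b} => x.val))) := by
    ext (i | u) (j | v)
    · fin_cases i <;> fin_cases j <;>
        simp [hB, e, Matrix.updateRow_apply, Pi.single_apply, hne, hne.symm]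
    · fin_cases i <;>
        simp [hB, e, Matrix.updateRow_apply, Pi.single_apply, hne, hne.symm, v.2.1, v.2.2]
    · rfl
    · simp [hB, e, Matrix.updateRow_apply, u.2.1, u.2.2, hNval]
  have hD3 : B.det =
      -((-(M.submatrix (fun x : {v : V // v ≠ a ∧ v ≠ b} => x.val)
            (fun x : {v : V // v ≠ a ∧ v ≠ b} => x.val))).det) := by
    rw [← Matrix.det_submatrix_equiv_self e, hsub, Matrix.det_fromBlocks_zero₁₂]
    have hdet2 : (!![(0 : ℤ), -1; -1, 0]).det = -1 := by
      simp [Matrix.det_fin_two]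
    rw [hdet2]
    ring
  rw [expand, hD1, hD2, hD3, hN]
  ring
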